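/- arXiv:2203.14740 — 2 statements merged into one kernel-verified Lean document; each statement's English description precedes it below -/
import Mathlib

section
/- For the Frank–Wolfe algorithm run for T iterations, the best iterate satisfies max_{0 ≤ j ≤ T} F(x(t_j)) ≥ (1/4) F(x*) − (nL/8) · H_{2,T}/H_T², where H_T = ∑_{k=1}^T 1/k and H_{2,T} = ∑_{k=1}^T 1/k². -/
/-- The harmonic number `H j = ∑_{k=1}^j 1/k` (with `H 0 = 0`). -/
noncomputable def harmonicNum (j : ℕ) : ℝ := ∑ k ∈ Finset.range j, (1 : ℝ) / (k + 1)

/-- `H_{2,j} = ∑_{k=1}^j 1/k²`. -/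
noncomputable def harmonicNum2 (j : ℕ) : ℝ := ∑ k ∈ Finset.range j, (1 : ℝ) / ((k : ℝ) + 1) ^ 2

/-- The time values `t_j = 1/(1 - ln(1 + H_j/H_T)) - 1` of the Frank–Wolfe algorithm. -/
noncomputable def fwTime (T j : ℕ) : ℝ :=
  1 / (1 - Real.log (1 + harmonicNum j / harmonicNum T)) - 1

/-- The Frank–Wolfe step ratio `e^{-1/(1+t_j) + 1/(1+t_{j+1})}`. -/
noncomputable def fwRatio (T j : ℕ) : ℝ :=
  Real.exp (-(1 / (1 + fwTime T j)) + 1 / (1 + fwTime T (j + 1)))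

/-- `√a_{t_j} = e^{t_j/(1+t_j)}`. -/
noncomputable def fwSqa (T j : ℕ) : ℝ := Real.exp (fwTime T j / (1 + fwTime T j))

/-- `F : [0,1]^n → ℝ` is DR-submodular: for all `x ≤ y` in `[0,1]^n`, coordinates `i` and
`a > 0` with `x + a·e_i, y + a·e_i ∈ [0,1]^n`, one has
`F(x + a·e_i) - F(x) ≥ F(y + a·e_i) - F(y)`. -/
def DRSubmodular {n : ℕ} (F : (Fin n → ℝ) → ℝ) : Prop :=
  ∀ x y : Fin n → ℝ, x ∈ Set.Icc (0 : Fin n → ℝ) 1 → y ∈ Set.Icc (0 : Fin n → ℝ) 1 →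
    x ≤ y → ∀ i : Fin n, ∀ a : ℝ, 0 < a →
      x + a • (Pi.single i 1 : Fin n → ℝ) ∈ Set.Icc (0 : Fin n → ℝ) 1 →
      y + a • (Pi.single i 1 : Fin n → ℝ) ∈ Set.Icc (0 : Fin n → ℝ) 1 →
      F (y + a • (Pi.single i 1 : Fin n → ℝ)) - F y ≤
        F (x + a • (Pi.single i 1 : Fin n → ℝ)) - F x

/-- The continuous linear map `y ↦ ⟨g, y⟩ = ∑ i, g i * y i` on `ℝⁿ`. -/
noncomputable def gradCLM {n : ℕ} (g : Fin n → ℝ) : (Fin n → ℝ) →L[ℝ] ℝ :=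
  ∑ i, g i • (ContinuousLinearMap.proj i : (Fin n → ℝ) →L[ℝ] ℝ)

/-- `gradF` is the gradient of `F` on the box `[0,1]^n`: at each point of the box, `F` is
differentiable within the box with derivative `y ↦ ⟨gradF z, y⟩`. -/
def HasGradientOnBox {n : ℕ} (F : (Fin n → ℝ) → ℝ) (gradF : (Fin n → ℝ) → Fin n → ℝ) : Prop :=
  ∀ z ∈ Set.Icc (0 : Fin n → ℝ) 1, HasFDerivWithinAt F (gradCLM (gradF z)) (Set.Icc 0 1) z


section Aux
open Filter Topology Set Finset

lemma gradCLM_apply {n : ℕ} (g y : Fin n → ℝ) : gradCLM g y = ∑ i, g i * y i := by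
  simp [gradCLM, ContinuousLinearMap.sum_apply]

lemma gradCLM_single {n : ℕ} (g : Fin n → ℝ) (i : Fin n) :
    gradCLM g (Pi.single i 1) = g i := by
  rw [gradCLM_apply]
  simp [Pi.single_apply, mul_ite, Finset.sum_ite_eq']

lemma path_deriv {n : ℕ} (y c : Fin n → ℝ) (a : ℝ) :
    HasDerivAt (fun a : ℝ => y + a • c) c a := by
  simpa using ((hasDerivAt_id a).smul_const c).const_add y

variable {n : ℕ} {F : (Fin n → ℝ) → ℝ} {gradF : (Fin n → ℝ) → Fin n → ℝ}

lemma tendsto_slope_right (hgrad : HasGradientOnBox F gradF)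
    {y : Fin n → ℝ} (hy : y ∈ Set.Icc (0:Fin n → ℝ) 1) (i : Fin n) {ε : ℝ} (hε : 0 < ε)
    (hmaps : ∀ a ∈ Set.Icc (0:ℝ) ε,
      y + a • (Pi.single i 1 : Fin n → ℝ) ∈ Set.Icc (0:Fin n → ℝ) 1) :
    Tendsto (fun a : ℝ => (F (y + a • (Pi.single i 1 : Fin n → ℝ)) - F y) / a)
      (𝓝[Set.Ioc 0 ε] 0) (𝓝 (gradF y i)) := by
  set p : ℝ → (Fin n → ℝ) := fun a => y + a • (Pi.single i 1 : Fin n → ℝ) with hp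
  have h0 : p 0 = y := by simp [hp]
  have hcomp : HasDerivWithinAt (F ∘ p) (gradF y i) (Set.Icc 0 ε) 0 := by
    have h := (hgrad y hy).comp_hasDerivWithinAt_of_eq (x := (0:ℝ))
      ((path_deriv y _ 0).hasDerivWithinAt) (fun a ha => hmaps a ha) h0.symm
    rwa [gradCLM_single] at h
  have htend := hasDerivWithinAt_iff_tendsto_slope.1 hcomp
  have hmono : Tendsto (slope (F ∘ p) 0) (𝓝[Set.Ioc 0 ε] 0) (𝓝 (gradF y i)) :=
    htend.mono_left (nhdsWithin_mono 0 (by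
      intro a ha
      exact ⟨⟨ha.1.le, ha.2⟩, ne_of_gt ha.1⟩))
  refine hmono.congr fun a => ?_
  simp [slope_def_field, h0, hp]

lemma tendsto_slope_left (hgrad : HasGradientOnBox F gradF)
    {y : Fin n → ℝ} (hy : y ∈ Set.Icc (0:Fin n → ℝ) 1) (i : Fin n) {ε : ℝ}
    (hmaps : ∀ a ∈ Set.Icc (-ε) (0:ℝ),
      y + a • (Pi.single i 1 : Fin n → ℝ) ∈ Set.Icc (0:Fin n → ℝ) 1) :
    Tendsto (fun a : ℝ => (F (y + a • (Pi.single i 1 : Fin n → ℝ)) - F y) / a)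
      (𝓝[Set.Ico (-ε) 0] 0) (𝓝 (gradF y i)) := by
  set p : ℝ → (Fin n → ℝ) := fun a => y + a • (Pi.single i 1 : Fin n → ℝ) with hp
  have h0 : p 0 = y := by simp [hp]
  have hcomp : HasDerivWithinAt (F ∘ p) (gradF y i) (Set.Icc (-ε) 0) 0 := by
    have h := (hgrad y hy).comp_hasDerivWithinAt_of_eq (x := (0:ℝ))
      ((path_deriv y _ 0).hasDerivWithinAt) (fun a ha => hmaps a ha) h0.symm
    rwa [gradCLM_single] at h
  have htend := hasDerivWithinAt_iff_tendsto_slope.1 hcomp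
  have hmono : Tendsto (slope (F ∘ p) 0) (𝓝[Set.Ico (-ε) 0] 0) (𝓝 (gradF y i)) :=
    htend.mono_left (nhdsWithin_mono 0 (by
      intro a ha
      exact ⟨⟨ha.1, ha.2.le⟩, ne_of_lt ha.2⟩))
  refine hmono.congr fun a => ?_
  simp [slope_def_field, h0, hp]


lemma mem_box_iff (z : Fin n → ℝ) :
    z ∈ Set.Icc (0:Fin n → ℝ) 1 ↔ ∀ i, z i ∈ Set.Icc (0:ℝ) 1 := by
  simp [Set.mem_Icc, Pi.le_def, forall_and]

lemma shift_mem_box {y : Fin n → ℝ} (hy : y ∈ Set.Icc (0:Fin n → ℝ) 1) (i : Fin n) {a : ℝ}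
    (h0 : 0 ≤ y i + a) (h1 : y i + a ≤ 1) :
    y + a • (Pi.single i 1 : Fin n → ℝ) ∈ Set.Icc (0:Fin n → ℝ) 1 := by
  rw [mem_box_iff] at hy ⊢
  intro j
  by_cases hj : j = i
  · subst hj; simpa using ⟨h0, h1⟩
  · simpa [Pi.single_apply, hj] using hy j

/-- Antitonicity of the gradient, right-difference version. -/
lemma grad_anti_right (hDR : DRSubmodular F) (hgrad : HasGradientOnBox F gradF)
    {z w : Fin n → ℝ} (hz : z ∈ Set.Icc (0:Fin n → ℝ) 1) (hw : w ∈ Set.Icc (0:Fin n → ℝ) 1)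
    (hzw : z ≤ w) (i : Fin n) (hwi : w i < 1) : gradF w i ≤ gradF z i := by
  have hzi : z i ≤ w i := hzw i
  have hz0 : 0 ≤ z i := ((mem_box_iff z).1 hz i).1
  have hw0 : 0 ≤ w i := ((mem_box_iff w).1 hw i).1
  set ε : ℝ := 1 - w i with hε
  have hεpos : 0 < ε := by simp only [hε]; linarith
  have hmw : ∀ a ∈ Set.Icc (0:ℝ) ε,
      w + a • (Pi.single i 1 : Fin n → ℝ) ∈ Set.Icc (0:Fin n → ℝ) 1 := fun a ha =>
    shift_mem_box hw i (by linarith [ha.1]) (by have := ha.2; simp only [hε] at this; linarith)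
  have hmz : ∀ a ∈ Set.Icc (0:ℝ) ε,
      z + a • (Pi.single i 1 : Fin n → ℝ) ∈ Set.Icc (0:Fin n → ℝ) 1 := fun a ha =>
    shift_mem_box hz i (by linarith [ha.1]) (by have := ha.2; simp only [hε] at this; linarith)
  have Tw := tendsto_slope_right hgrad hw i hεpos hmw
  have Tz := tendsto_slope_right hgrad hz i hεpos hmz
  haveI : (𝓝[Set.Ioc (0:ℝ) ε] 0).NeBot := by
    refine mem_closure_iff_nhdsWithin_neBot.1 ?_
    rw [closure_Ioc hεpos.ne]
    exact ⟨le_refl 0, hεpos.le⟩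
  refine le_of_tendsto_of_tendsto Tw Tz ?_
  filter_upwards [self_mem_nhdsWithin] with a ha
  have hDRa := hDR z w hz hw hzw i a ha.1 (hmz a ⟨ha.1.le, ha.2⟩) (hmw a ⟨ha.1.le, ha.2⟩)
  exact (div_le_div_iff_of_pos_right ha.1).2 hDRa

/-- Antitonicity of the gradient, left-difference version. -/
lemma grad_anti_left (hDR : DRSubmodular F) (hgrad : HasGradientOnBox F gradF)
    {z w : Fin n → ℝ} (hz : z ∈ Set.Icc (0:Fin n → ℝ) 1) (hw : w ∈ Set.Icc (0:Fin n → ℝ) 1)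
    (hzw : z ≤ w) (i : Fin n) (hzi0 : 0 < z i) : gradF w i ≤ gradF z i := by
  have hzi : z i ≤ w i := hzw i
  have hz1 : z i ≤ 1 := ((mem_box_iff z).1 hz i).2
  have hw1 : w i ≤ 1 := ((mem_box_iff w).1 hw i).2
  set ε : ℝ := z i with hε
  have hεpos : 0 < ε := hzi0
  have hmw : ∀ a ∈ Set.Icc (-ε) (0:ℝ),
      w + a • (Pi.single i 1 : Fin n → ℝ) ∈ Set.Icc (0:Fin n → ℝ) 1 := fun a ha =>
    shift_mem_box hw i (by have := ha.1; simp only [hε] at this; linarith)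
      (by linarith [ha.2])
  have hmz : ∀ a ∈ Set.Icc (-ε) (0:ℝ),
      z + a • (Pi.single i 1 : Fin n → ℝ) ∈ Set.Icc (0:Fin n → ℝ) 1 := fun a ha =>
    shift_mem_box hz i (by have := ha.1; simp only [hε] at this; linarith)
      (by linarith [ha.2])
  have Tw := tendsto_slope_left hgrad hw i hmw
  have Tz := tendsto_slope_left hgrad hz i hmz
  haveI : (𝓝[Set.Ico (-ε) (0:ℝ)] 0).NeBot := by
    refine mem_closure_iff_nhdsWithin_neBot.1 ?_
    rw [closure_Ico (by linarith : -ε ≠ 0)]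
    exact ⟨by linarith, le_refl 0⟩
  refine le_of_tendsto_of_tendsto Tw Tz ?_
  filter_upwards [self_mem_nhdsWithin] with a ha
  have ha1 : -ε ≤ a := ha.1
  have ha2 : a < 0 := ha.2
  set b : ℝ := -a with hb
  have hbpos : 0 < b := by simp only [hb]; linarith
  have key : F w - F (w + a • (Pi.single i 1 : Fin n → ℝ)) ≤
      F z - F (z + a • (Pi.single i 1 : Fin n → ℝ)) := by
    have e1 : (z + a • (Pi.single i 1 : Fin n → ℝ)) + b • (Pi.single i 1 : Fin n → ℝ) = z := by
      simp only [hb]; module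
    have e2 : (w + a • (Pi.single i 1 : Fin n → ℝ)) + b • (Pi.single i 1 : Fin n → ℝ) = w := by
      simp only [hb]; module
    have hDRa := hDR (z + a • (Pi.single i 1 : Fin n → ℝ)) (w + a • (Pi.single i 1 : Fin n → ℝ))
      (hmz a ⟨ha1, ha2.le⟩) (hmw a ⟨ha1, ha2.le⟩)
      (by intro j; by_cases hj : j = i <;> simp [Pi.single_apply, hj] <;> [linarith [hzw i]; exact hzw j])
      i b hbpos (by rw [e1]; exact hz) (by rw [e2]; exact hw)
    rw [e1, e2] at hDRa
    linarith
  have : (F (w + a • (Pi.single i 1 : Fin n → ℝ)) - F w) / a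
      = (F w - F (w + a • (Pi.single i 1 : Fin n → ℝ))) / b := by
    rw [hb, div_neg, ← neg_div, neg_sub]
  rw [this]
  have : (F (z + a • (Pi.single i 1 : Fin n → ℝ)) - F z) / a
      = (F z - F (z + a • (Pi.single i 1 : Fin n → ℝ))) / b := by
    rw [hb, div_neg, ← neg_div, neg_sub]
  rw [this]
  exact (div_le_div_iff_of_pos_right hbpos).2 key

lemma seg_mem_box {z w : Fin n → ℝ} (hz : z ∈ Set.Icc (0:Fin n → ℝ) 1)
    (hw : w ∈ Set.Icc (0:Fin n → ℝ) 1) {s : ℝ} (hs : s ∈ Set.Icc (0:ℝ) 1) :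
    z + s • (w - z) ∈ Set.Icc (0:Fin n → ℝ) 1 := by
  have := (convex_Icc (0:Fin n → ℝ) 1) hz hw (by linarith [hs.2] : (0:ℝ) ≤ 1 - s) hs.1 (by ring)
  convert this using 1
  module

lemma seg_hasDeriv (hgrad : HasGradientOnBox F gradF)
    {z w : Fin n → ℝ} (hz : z ∈ Set.Icc (0:Fin n → ℝ) 1) (hw : w ∈ Set.Icc (0:Fin n → ℝ) 1)
    {s : ℝ} (hs : s ∈ Set.Icc (0:ℝ) 1) :
    HasDerivWithinAt (fun s : ℝ => F (z + s • (w - z)))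
      (∑ i, gradF (z + s • (w - z)) i * (w i - z i)) (Set.Icc 0 1) s := by
  have h := (hgrad (z + s • (w - z)) (seg_mem_box hz hw hs)).comp_hasDerivWithinAt_of_eq
    (x := s) ((path_deriv z (w - z) s).hasDerivWithinAt)
    (fun a ha => seg_mem_box hz hw ha) rfl
  rw [gradCLM_apply] at h
  exact h

/-- Concavity along nonnegative directions: upper bound by gradient at the lower point. -/
lemma concave_upper (hDR : DRSubmodular F) (hgrad : HasGradientOnBox F gradF)
    {z w : Fin n → ℝ} (hz : z ∈ Set.Icc (0:Fin n → ℝ) 1) (hw : w ∈ Set.Icc (0:Fin n → ℝ) 1)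
    (hzw : z ≤ w) : F w - F z ≤ ∑ i, gradF z i * (w i - z i) := by
  set C : ℝ := ∑ i, gradF z i * (w i - z i) with hC
  set g : ℝ → ℝ := fun s => F (z + s • (w - z)) - s * C with hg
  have hanti : AntitoneOn g (Set.Icc 0 1) := by
    apply antitoneOn_of_hasDerivWithinAt_nonpos (convex_Icc 0 1)
      (f' := fun s => (∑ i, gradF (z + s • (w - z)) i * (w i - z i)) - C)
    · intro s hs
      exact ((seg_hasDeriv hgrad hz hw hs).sub
        (((hasDerivAt_id s).mul_const C).hasDerivWithinAt)).continuousWithinAt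
    · intro s hs
      rw [interior_Icc] at hs
      have h := ((seg_hasDeriv hgrad hz hw ⟨hs.1.le, hs.2.le⟩).sub
        (((hasDerivAt_id s).mul_const C).hasDerivWithinAt)).mono
        (interior_subset : interior (Set.Icc (0:ℝ) 1) ⊆ _)
      simp only [one_mul] at h; exact h
    · intro s hs
      rw [interior_Icc] at hs
      rw [sub_nonpos, hC]
      apply Finset.sum_le_sum
      intro i _
      have hwz : 0 ≤ w i - z i := by linarith [hzw i]
      rcases eq_or_lt_of_le hwz with he | hlt
      · rw [← he]; ring_nf; rfl
      · have hmem := seg_mem_box hz hw (⟨hs.1.le, hs.2.le⟩ : s ∈ Set.Icc (0:ℝ) 1)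
        have hlt1 : (z + s • (w - z)) i < 1 := by
          have : (z + s • (w - z)) i = z i + s * (w i - z i) := by simp
          rw [this]
          have h2 : z i + s * (w i - z i) < z i + 1 * (w i - z i) := by
            have := mul_lt_mul_of_pos_right hs.2 (by linarith : (0:ℝ) < w i - z i)
            linarith
          have h4 : w i ≤ 1 := ((mem_box_iff w).1 hw i).2
          nlinarith
        have hle : z ≤ z + s • (w - z) := by
          intro j
          have : (z + s • (w - z)) j = z j + s * (w j - z j) := by simp
          rw [this]
          have := hzw j
          nlinarith [hs.1]
        have := grad_anti_right hDR hgrad hz hmem hle i hlt1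
        exact mul_le_mul_of_nonneg_right this hwz
  have h01 := hanti (Set.left_mem_Icc.2 zero_le_one) (Set.right_mem_Icc.2 zero_le_one) zero_le_one
  simp only [hg, zero_smul, add_zero, one_smul, zero_mul, one_mul, sub_zero] at h01
  have : z + (w - z) = w := by module
  rw [this] at h01
  linarith

/-- Concavity along nonnegative directions: lower bound by gradient at the upper point. -/
lemma concave_lower (hDR : DRSubmodular F) (hgrad : HasGradientOnBox F gradF)
    {z w : Fin n → ℝ} (hz : z ∈ Set.Icc (0:Fin n → ℝ) 1) (hw : w ∈ Set.Icc (0:Fin n → ℝ) 1)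
    (hzw : z ≤ w) : ∑ i, gradF w i * (w i - z i) ≤ F w - F z := by
  set C : ℝ := ∑ i, gradF w i * (w i - z i) with hC
  set g : ℝ → ℝ := fun s => F (z + s • (w - z)) - s * C with hg
  have hmono : MonotoneOn g (Set.Icc 0 1) := by
    apply monotoneOn_of_hasDerivWithinAt_nonneg (convex_Icc 0 1)
      (f' := fun s => (∑ i, gradF (z + s • (w - z)) i * (w i - z i)) - C)
    · intro s hs
      exact ((seg_hasDeriv hgrad hz hw hs).sub
        (((hasDerivAt_id s).mul_const C).hasDerivWithinAt)).continuousWithinAt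
    · intro s hs
      rw [interior_Icc] at hs
      have h := ((seg_hasDeriv hgrad hz hw ⟨hs.1.le, hs.2.le⟩).sub
        (((hasDerivAt_id s).mul_const C).hasDerivWithinAt)).mono
        (interior_subset : interior (Set.Icc (0:ℝ) 1) ⊆ _)
      simp only [one_mul] at h; exact h
    · intro s hs
      rw [interior_Icc] at hs
      rw [sub_nonneg, hC]
      apply Finset.sum_le_sum
      intro i _
      have hwz : 0 ≤ w i - z i := by linarith [hzw i]
      rcases eq_or_lt_of_le hwz with he | hlt
      · rw [← he]; ring_nf; rfl
      · have hmem := seg_mem_box hz hw (⟨hs.1.le, hs.2.le⟩ : s ∈ Set.Icc (0:ℝ) 1)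
        have hz0 : 0 ≤ z i := ((mem_box_iff z).1 hz i).1
        have hpos : 0 < (z + s • (w - z)) i := by
          have : (z + s • (w - z)) i = z i + s * (w i - z i) := by simp
          rw [this]
          nlinarith [hs.1]
        have hle : z + s • (w - z) ≤ w := by
          intro j
          have : (z + s • (w - z)) j = z j + s * (w j - z j) := by simp
          rw [this]
          have := hzw j
          nlinarith [hs.2]
        have := grad_anti_left hDR hgrad hmem hw hle i hpos
        exact mul_le_mul_of_nonneg_right this hwz
  have h01 := hmono (Set.left_mem_Icc.2 zero_le_one) (Set.right_mem_Icc.2 zero_le_one) zero_le_one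
  simp only [hg, zero_smul, add_zero, one_smul, zero_mul, one_mul, sub_zero] at h01
  have : z + (w - z) = w := by module
  rw [this] at h01
  linarith

/-- Key lemma: gradient inner product with `x* - x` is lower bounded. -/
lemma grad_dot_ge (hDR : DRSubmodular F) (hgrad : HasGradientOnBox F gradF)
    (hFnonneg : ∀ z ∈ Set.Icc (0 : Fin n → ℝ) 1, 0 ≤ F z)
    {xx xs : Fin n → ℝ} (hx : xx ∈ Set.Icc (0:Fin n → ℝ) 1) (hxs : xs ∈ Set.Icc (0:Fin n → ℝ) 1)
    {m : ℝ} (hm0 : 0 ≤ m) (hm1 : m ≤ 1) (hxm : ∀ i, xx i ≤ m) :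
    (1 - m) * F xs - 2 * F xx ≤ ∑ i, gradF xx i * (xs i - xx i) := by
  classical
  set q : Fin n → ℝ := fun i => max (xx i) (xs i) with hqdef
  set p : Fin n → ℝ := fun i => min (xx i) (xs i) with hpdef
  have hq : q ∈ Set.Icc (0:Fin n → ℝ) 1 := by
    rw [mem_box_iff]; intro i
    have h1 := (mem_box_iff xx).1 hx i
    have h2 := (mem_box_iff xs).1 hxs i
    exact ⟨le_max_of_le_left h1.1, max_le h1.2 h2.2⟩
  have hp : p ∈ Set.Icc (0:Fin n → ℝ) 1 := by
    rw [mem_box_iff]; intro i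
    have h1 := (mem_box_iff xx).1 hx i
    have h2 := (mem_box_iff xs).1 hxs i
    exact ⟨le_min h1.1 h2.1, min_le_of_left_le h1.2⟩
  have hxq : xx ≤ q := fun i => le_max_left _ _
  have hpx : p ≤ xx := fun i => min_le_left _ _
  have S1 : F q - F xx ≤ ∑ i, gradF xx i * (q i - xx i) := concave_upper hDR hgrad hx hq hxq
  have S2 : ∑ i, gradF xx i * (xx i - p i) ≤ F xx - F p := concave_lower hDR hgrad hp hx hpx
  have hsplit : ∑ i, gradF xx i * (xs i - xx i)
      = (∑ i, gradF xx i * (q i - xx i)) - ∑ i, gradF xx i * (xx i - p i) := by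
    rw [← Finset.sum_sub_distrib]
    apply Finset.sum_congr rfl
    intro i _
    have := max_add_min (xx i) (xs i)
    simp only [hqdef, hpdef]
    linear_combination (-(gradF xx i)) * this
  have hFp : 0 ≤ F p := hFnonneg p hp
  -- F q ≥ (1 - m) * F xs
  have hFq : (1 - m) * F xs ≤ F q := by
    rcases eq_or_lt_of_le hm0 with hm | hmpos
    · have hqxs : q = xs := by
        funext i
        have h1 := hxm i
        have h2 := ((mem_box_iff xx).1 hx i).1
        have h3 : xx i = 0 := le_antisymm (by rw [← hm] at h1; exact h1) h2
        simp [hqdef, h3, ((mem_box_iff xs).1 hxs i).1]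
      rw [hqxs, ← hm]; simp
    · set r : Fin n → ℝ := xs + (1/m) • (q - xs) with hrdef
      have hqr : ∀ i, 0 ≤ q i - xs i := fun i => by
        simp [hqdef]
      have hqm : ∀ i, q i - xs i ≤ m := by
        intro i
        simp only [hqdef]
        rcases max_cases (xx i) (xs i) with ⟨h, _⟩ | ⟨h, _⟩
        · rw [h]; have := ((mem_box_iff xs).1 hxs i).1; linarith [hxm i]
        · rw [h]; linarith [hm0]
      have hr : r ∈ Set.Icc (0:Fin n → ℝ) 1 := by
        rw [mem_box_iff]; intro i
        have hri : r i = xs i + (q i - xs i) / m := by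
          simp [hrdef]; ring
        have h2 := (mem_box_iff xs).1 hxs i
        have hdnn : 0 ≤ (q i - xs i) / m := div_nonneg (hqr i) hm0
        constructor
        · rw [hri]; linarith [h2.1]
        · rw [hri]
          have key : q i - xs i ≤ (1 - xs i) * m := by
            simp only [hqdef]
            rcases max_cases (xx i) (xs i) with ⟨h, _⟩ | ⟨h, _⟩ <;> rw [h]
            · nlinarith [hxm i, h2.1, hm1]
            · nlinarith [h2.2, hm0]
          have : (q i - xs i) / m ≤ 1 - xs i := (div_le_iff₀ hmpos).2 key
          linarith
      have hxsr : xs ≤ r := by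
        intro i
        have hri : r i = xs i + (q i - xs i) / m := by simp [hrdef]; ring
        rw [hri]
        have := div_nonneg (hqr i) hm0
        linarith
      have hxsq : xs ≤ q := fun i => le_max_right _ _
      have hqr2 : q ≤ r := by
        intro i
        have hri : r i = xs i + (q i - xs i) / m := by simp [hrdef]; ring
        rw [hri]
        have h1 := hqr i
        have h2 : (q i - xs i) ≤ (q i - xs i) / m := by
          rw [le_div_iff₀ hmpos]
          nlinarith
        linarith
      have A : ∑ i, gradF q i * (q i - xs i) ≤ F q - F xs :=
        concave_lower hDR hgrad hxs hq hxsq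
      have B : F r - F q ≤ ∑ i, gradF q i * (r i - q i) :=
        concave_upper hDR hgrad hq hr hqr2
      have hrq : ∀ i, r i - q i = (1/m - 1) * (q i - xs i) := by
        intro i
        have hri : r i = xs i + (q i - xs i) / m := by simp [hrdef]; ring
        rw [hri]
        field_simp
        ring
      have hsum : ∑ i, gradF q i * (r i - q i) = (1/m - 1) * ∑ i, gradF q i * (q i - xs i) := by
        rw [Finset.mul_sum]
        apply Finset.sum_congr rfl
        intro i _
        rw [hrq i]; ring
      have hfac : 0 ≤ 1/m - 1 := by
        rw [sub_nonneg, le_div_iff₀ hmpos]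
        linarith
      have hFr : 0 ≤ F r := hFnonneg r hr
      rw [hsum] at B
      have hB2 : F r - F q ≤ (1/m - 1) * (F q - F xs) :=
        B.trans (mul_le_mul_of_nonneg_left A hfac)
      have hm' : m ≠ 0 := ne_of_gt hmpos
      have h5 : m * (F r - F q) ≤ (1 - m) * (F q - F xs) := by
        calc m * (F r - F q) ≤ m * ((1/m - 1) * (F q - F xs)) :=
              mul_le_mul_of_nonneg_left hB2 hmpos.le
          _ = (1 - m) * (F q - F xs) := by field_simp
      nlinarith [h5, mul_nonneg hmpos.le hFr]
  calc (1 - m) * F xs - 2 * F xx ≤ F q - 2 * F xx + F p - F p := by linarith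
    _ ≤ (F q - F xx) - (F xx - F p) := by linarith
    _ ≤ _ := by rw [hsplit]; linarith
lemma harmonicNum_nonneg (j : ℕ) : 0 ≤ harmonicNum j :=
  Finset.sum_nonneg fun k _ => by positivity

lemma harmonicNum_succ (j : ℕ) : harmonicNum (j+1) = harmonicNum j + 1/((j:ℝ)+1) := by
  rw [harmonicNum, Finset.sum_range_succ]; rfl

lemma harmonicNum2_succ (j : ℕ) : harmonicNum2 (j+1) = harmonicNum2 j + 1/(((j:ℝ)+1))^2 := by
  rw [harmonicNum2, Finset.sum_range_succ]; rfl

lemma harmonicNum2_nonneg (j : ℕ) : 0 ≤ harmonicNum2 j :=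
  Finset.sum_nonneg fun k _ => by positivity

lemma harmonicNum_mono {j T : ℕ} (h : j ≤ T) : harmonicNum j ≤ harmonicNum T := by
  apply Finset.sum_le_sum_of_subset_of_nonneg (Finset.range_subset_range.2 h)
  intro k _ _; positivity

lemma one_le_harmonicNum {T : ℕ} (h : 1 ≤ T) : 1 ≤ harmonicNum T := by
  have : harmonicNum 1 ≤ harmonicNum T := harmonicNum_mono h
  simpa [harmonicNum] using this

lemma fwRatio_eq {T j : ℕ} (hT : 1 ≤ T) (hj : j + 1 ≤ T) :
    fwRatio T j = (1 + harmonicNum j / harmonicNum T) /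
      (1 + harmonicNum (j+1) / harmonicNum T) := by
  have hHT : 1 ≤ harmonicNum T := one_le_harmonicNum hT
  have hHTpos : 0 < harmonicNum T := by linarith
  have hkey : ∀ k ≤ T, 1 / (1 + fwTime T k) = 1 - Real.log (1 + harmonicNum k / harmonicNum T) := by
    intro k hk
    have h1 : harmonicNum k / harmonicNum T ≤ 1 :=
      (div_le_one hHTpos).2 (harmonicNum_mono hk)
    have h0 : 0 ≤ harmonicNum k / harmonicNum T := by
      have := harmonicNum_nonneg k; positivity
    have hlog : Real.log (1 + harmonicNum k / harmonicNum T) < 1 := by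
      have : Real.log (1 + harmonicNum k / harmonicNum T) ≤ Real.log 2 :=
        Real.log_le_log (by linarith) (by linarith)
      have h2 := Real.log_two_lt_d9
      linarith
    have hne : 1 - Real.log (1 + harmonicNum k / harmonicNum T) ≠ 0 := by linarith
    rw [fwTime]
    rw [add_sub_cancel, one_div_one_div]
  rw [fwRatio, hkey j (by omega), hkey (j+1) hj]
  have e1 : -(1 - Real.log (1 + harmonicNum j / harmonicNum T)) +
      (1 - Real.log (1 + harmonicNum (j+1) / harmonicNum T))
      = Real.log (1 + harmonicNum j / harmonicNum T) -
        Real.log (1 + harmonicNum (j+1) / harmonicNum T) := by ring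
  rw [e1, Real.exp_sub, Real.exp_log, Real.exp_log]
  · have := harmonicNum_nonneg (j+1); positivity
  · have := harmonicNum_nonneg j; positivity


end Aux

set_option maxHeartbeats 1000000 in
/-- Theorem 1 of the paper, explicit form. After `T` iterations the best
Frank–Wolfe iterate satisfies
`max_{0 ≤ j ≤ T} F(x(t_j)) ≥ (1/4) F(x*) - (nL/8) H_{2,T} / H_T²`. -/
theorem fw_best_iterate_bound
    (n : ℕ) (F : (Fin n → ℝ) → ℝ) (gradF : (Fin n → ℝ) → Fin n → ℝ)
    (L : ℝ) (hL : 0 ≤ L)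
    (hFnonneg : ∀ z ∈ Set.Icc (0 : Fin n → ℝ) 1, 0 ≤ F z)
    (hDR : DRSubmodular F)
    (hgrad : HasGradientOnBox F gradF)
    (hsmooth : ∀ z ∈ Set.Icc (0 : Fin n → ℝ) 1, ∀ w ∈ Set.Icc (0 : Fin n → ℝ) 1,
      |F w - F z - ∑ i, gradF z i * (w i - z i)| ≤ L / 2 * ∑ i, (w i - z i) ^ 2)
    (P : Set (Fin n → ℝ)) (hPsub : P ⊆ Set.Icc 0 1) (hPconv : Convex ℝ P)
    (h0P : (0 : Fin n → ℝ) ∈ P)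
    (xstar : Fin n → ℝ) (hxstarP : xstar ∈ P) (hxstarMax : ∀ z ∈ P, F z ≤ F xstar)
    (T : ℕ) (hT : 1 ≤ T)
    (x v : ℕ → Fin n → ℝ)
    (hx0 : x 0 = 0)
    (hvP : ∀ j < T, v j ∈ P)
    (hvmax : ∀ j < T, ∀ w ∈ P, ∑ i, gradF (x j) i * w i ≤ ∑ i, gradF (x j) i * v j i)
    (hstep : ∀ j < T, x (j + 1) = fwRatio T j • x j + (1 - fwRatio T j) • v j)
    (hF0 : F 0 = 0) :
    ∃ j ≤ T, F (x j) ≥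
      1 / 4 * F xstar - (n : ℝ) * L / 8 * (harmonicNum2 T / harmonicNum T ^ 2) := by
  classical
  set Fs : ℝ := F xstar with hFsdef
  have hHT1 : 1 ≤ harmonicNum T := one_le_harmonicNum hT
  have hHTpos : 0 < harmonicNum T := by linarith
  set HT : ℝ := harmonicNum T with hHTdef
  set s : ℕ → ℝ := fun j => 1 + harmonicNum j / HT with hsdef
  set δ : ℕ → ℝ := fun j => (1/((j:ℝ)+1)) / HT with hδdef
  have hδpos : ∀ j, 0 < δ j := fun j => by
    have : (0:ℝ) < 1/((j:ℝ)+1) := by positivity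
    exact div_pos this hHTpos
  have hs1 : ∀ j, 1 ≤ s j := fun j => by
    have h0 : 0 ≤ harmonicNum j / HT := div_nonneg (harmonicNum_nonneg j) hHTpos.le
    simp only [hsdef]; linarith
  have hspos : ∀ j, 0 < s j := fun j => lt_of_lt_of_le one_pos (hs1 j)
  have hs2 : ∀ j ≤ T, s j ≤ 2 := fun j hj => by
    have h1 : harmonicNum j / HT ≤ 1 := (div_le_one hHTpos).2 (harmonicNum_mono hj)
    simp only [hsdef]; linarith
  have hs0 : s 0 = 1 := by simp [hsdef, harmonicNum]
  have hsT : s T = 2 := by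
    simp only [hsdef, hHTdef, div_self hHTpos.ne']; norm_num [div_self (show harmonicNum T ≠ 0 from hHTpos.ne')]
  have hsrec : ∀ j, s (j+1) = s j + δ j := fun j => by
    simp only [hsdef, hδdef, harmonicNum_succ, add_div]; ring
  have hratio : ∀ j, j < T → fwRatio T j = s j / s (j+1) := fun j hj => by
    rw [fwRatio_eq hT (by omega)]
  have hFs0 : 0 ≤ Fs := by rw [hFsdef, ← hF0]; exact hxstarMax 0 h0P
  have hxsB : xstar ∈ Set.Icc (0:Fin n → ℝ) 1 := hPsub hxstarP
  have herr : 0 ≤ (n : ℝ) * L / 8 * (harmonicNum2 T / HT ^ 2) := by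
    have := harmonicNum2_nonneg T
    positivity
  by_cases hbig : ∃ j, j ≤ T ∧ 1/4 * Fs ≤ F (x j)
  · obtain ⟨j, hj, hFj⟩ := hbig
    exact ⟨j, hj, by rw [ge_iff_le]; rw [hHTdef] at herr; linarith⟩
  push_neg at hbig
  -- invariant: x j ∈ P and coordinates bounded by 1 - 1/s j
  have hinv : ∀ j, j ≤ T → x j ∈ P ∧ ∀ i, x j i ≤ 1 - 1 / s j := by
    intro j
    induction j with
    | zero =>
      intro _
      rw [hx0]
      exact ⟨h0P, fun i => by rw [hs0]; norm_num⟩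
    | succ k ih =>
      intro hk
      have hkT : k < T := hk
      obtain ⟨hxP, hxb⟩ := ih (Nat.le_of_lt hkT)
      have hvPk := hvP k hkT
      set ρ : ℝ := s k / s (k+1) with hρdef
      have hρ0 : 0 ≤ ρ := le_of_lt (div_pos (hspos k) (hspos (k+1)))
      have hρ1 : ρ ≤ 1 := by
        rw [hρdef, div_le_one (hspos (k+1))]
        have := hδpos k
        rw [hsrec k]; linarith
      have hxe : x (k+1) = ρ • x k + (1 - ρ) • v k := by
        rw [hstep k hkT, hratio k hkT]
      constructor
      · rw [hxe]
        exact hPconv hxP hvPk hρ0 (by linarith) (by ring)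
      · intro i
        have hco : x (k+1) i = ρ * x k i + (1 - ρ) * v k i := by
          rw [hxe]; simp
        have hv1 : v k i ≤ 1 := ((mem_box_iff (v k)).1 (hPsub hvPk) i).2
        have hxk : x k i ≤ 1 - 1 / s k := hxb i
        have hkey : ρ * (1 - 1/s k) + (1 - ρ) * 1 = 1 - 1 / s (k+1) := by
          have hne1 : s k ≠ 0 := (hspos k).ne'
          have hne2 : s (k+1) ≠ 0 := (hspos (k+1)).ne'
          rw [hρdef]
          field_simp
          ring
        rw [hco, ← hkey]
        have t1 : ρ * x k i ≤ ρ * (1 - 1/s k) := mul_le_mul_of_nonneg_left hxk hρ0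
        have t2 : (1 - ρ) * v k i ≤ (1 - ρ) * 1 := mul_le_mul_of_nonneg_left hv1 (by linarith)
        linarith
  -- main induction
  have hmain : ∀ j, j ≤ T →
      harmonicNum j / HT * Fs - (n:ℝ)*L/2 * (harmonicNum2 j / HT^2) ≤ (s j)^2 * F (x j) := by
    intro j
    induction j with
    | zero =>
      intro _
      rw [hx0, hF0, hs0]
      simp [harmonicNum, harmonicNum2]
    | succ k ih =>
      intro hk
      have hkT : k < T := hk
      have hIH := ih (Nat.le_of_lt hkT)
      obtain ⟨hxP, hxb⟩ := hinv k (Nat.le_of_lt hkT)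
      obtain ⟨hxP1, _⟩ := hinv (k+1) hk
      have hxB : x k ∈ Set.Icc (0:Fin n → ℝ) 1 := hPsub hxP
      have hxB1 : x (k+1) ∈ Set.Icc (0:Fin n → ℝ) 1 := hPsub hxP1
      set σ : ℝ := s k with hσdef
      set d : ℝ := δ k with hddef
      have hτ : s (k+1) = σ + d := hsrec k
      have hdpos : 0 < d := hδpos k
      have hσ1 : 1 ≤ σ := hs1 k
      have hσ2 : σ ≤ 2 := hs2 k (Nat.le_of_lt hkT)
      have hτpos : 0 < σ + d := by linarith
      set g : Fin n → ℝ := gradF (x k) with hgdef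
      -- coordinate difference
      have hΔ : ∀ i, x (k+1) i - x k i = (d / (σ + d)) * (v k i - x k i) := by
        intro i
        have h1 : x (k+1) i = fwRatio T k * x k i + (1 - fwRatio T k) * v k i := by
          rw [hstep k hkT]; simp
        have h2 : fwRatio T k = σ/(σ+d) := by rw [hratio k hkT, hτ, ← hσdef]
        rw [h1, h2]
        have hne : σ + d ≠ 0 := hτpos.ne'
        field_simp
        ring
      set β : ℝ := d / (σ + d) with hβdef
      have hβ0 : 0 ≤ β := le_of_lt (div_pos hdpos hτpos)
      -- smoothness bound
      have hsm := hsmooth (x k) hxB (x (k+1)) hxB1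
      have hS : ∑ i, gradF (x k) i * (x (k+1) i - x k i)
          = β * ∑ i, g i * (v k i - x k i) := by
        rw [Finset.mul_sum]
        apply Finset.sum_congr rfl
        intro i _
        rw [hΔ i, hgdef]; ring
      have hSq : ∑ i, (x (k+1) i - x k i)^2 ≤ β^2 * (n:ℝ) := by
        have e : ∑ i, (x (k+1) i - x k i)^2 = β^2 * ∑ i, (v k i - x k i)^2 := by
          rw [Finset.mul_sum]
          apply Finset.sum_congr rfl
          intro i _
          rw [hΔ i]; ring
        rw [e]
        have hb : ∑ i, (v k i - x k i)^2 ≤ (n:ℝ) := by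
          have hle : ∀ i ∈ Finset.univ, (v k i - x k i)^2 ≤ 1 := by
            intro i _
            have h1 := (mem_box_iff (v k)).1 (hPsub (hvP k hkT)) i
            have h2 := (mem_box_iff (x k)).1 hxB i
            nlinarith [h1.1, h1.2, h2.1, h2.2]
          calc ∑ i, (v k i - x k i)^2 ≤ ∑ _i : Fin n, (1:ℝ) := Finset.sum_le_sum hle
            _ = (n:ℝ) := by simp
        exact mul_le_mul_of_nonneg_left hb (sq_nonneg β)
      -- gradient bound
      set W : ℝ := Fs / σ with hWdef
      have hσW : σ * W = Fs := by rw [hWdef]; field_simp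
      have hW2 : Fs / 2 ≤ W := by
        rw [hWdef]
        gcongr <;> linarith
      have hG : (1/σ) * Fs - 2 * F (x k) ≤ ∑ i, g i * (v k i - x k i) := by
        have hdot : (1 - (1 - 1/σ)) * Fs - 2 * F (x k) ≤ ∑ i, g i * (xstar i - x k i) := by
          apply grad_dot_ge hDR hgrad hFnonneg hxB hxsB
          · have : 1/σ ≤ 1 := by rw [div_le_one (by linarith)]; linarith
            linarith
          · have : 0 < 1/σ := by positivity
            linarith
          · intro i; exact hxb i
        have hv : ∑ i, g i * (xstar i - x k i) ≤ ∑ i, g i * (v k i - x k i) := by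
          have h1 := hvmax k hkT xstar hxstarP
          have e1 : ∑ i, g i * (xstar i - x k i)
              = (∑ i, g i * xstar i) - ∑ i, g i * (x k i) := by
            rw [← Finset.sum_sub_distrib]; apply Finset.sum_congr rfl; intros; ring
          have e2 : ∑ i, g i * (v k i - x k i)
              = (∑ i, g i * (v k i)) - ∑ i, g i * (x k i) := by
            rw [← Finset.sum_sub_distrib]; apply Finset.sum_congr rfl; intros; ring
          rw [e1, e2, hgdef]
          simp only [sub_le_sub_iff_right]
          exact h1
        have e3 : (1 - (1 - 1/σ)) * Fs = (1/σ) * Fs := by ring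
        rw [e3] at hdot
        linarith
      -- combine: multiplied per-step inequality
      have habs := abs_le.1 hsm
      have hstep1 : F (x k) + β * ((1/σ) * Fs - 2 * F (x k)) - L/2 * (β^2 * (n:ℝ))
          ≤ F (x (k+1)) := by
        have h1 : F (x k) + β * ((1/σ) * Fs - 2 * F (x k)) - L/2 * (β^2 * (n:ℝ))
            ≤ F (x k) + β * (∑ i, g i * (v k i - x k i)) - L/2 * (β^2 * (n:ℝ)) := by
          have := mul_le_mul_of_nonneg_left hG hβ0
          linarith
        have h2 : L/2 * (∑ i, (x (k+1) i - x k i)^2) ≤ L/2 * (β^2 * (n:ℝ)) :=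
          mul_le_mul_of_nonneg_left hSq (by linarith)
        have h3 := habs.1
        rw [hS] at h3
        linarith
      -- multiply by (σ+d)^2
      have h1 : (σ+d)^2 * F (x k) + d*(σ+d) * (W - 2 * F (x k)) - L/2 * (d^2 * (n:ℝ))
          ≤ (σ+d)^2 * F (x (k+1)) := by
        have hm := mul_le_mul_of_nonneg_left hstep1 (by positivity : (0:ℝ) ≤ (σ+d)^2)
        have heq : (σ+d)^2 * (F (x k) + β * ((1/σ) * Fs - 2 * F (x k)) - L/2 * (β^2 * (n:ℝ)))
            = (σ+d)^2 * F (x k) + d*(σ+d) * ((1/σ)*Fs - 2 * F (x k)) - L/2 * (d^2 * (n:ℝ)) := by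
          rw [hβdef]
          field_simp
        have heq2 : (1/σ)*Fs = W := by rw [hWdef]; field_simp
        rw [heq, heq2] at hm
        exact hm
      -- final arithmetic
      have hsmall : F (x k) < 1/4 * Fs := hbig k (Nat.le_of_lt hkT)
      have p1 : 0 ≤ d^2 * (W - F (x k)) := by
        apply mul_nonneg (sq_nonneg d)
        have : Fs/4 ≤ Fs/2 := by linarith
        linarith
      have p2 : d * (σ * W) = d * Fs := by rw [hσW]
      have hH1 : harmonicNum (k+1) / HT = harmonicNum k / HT + d := by
        rw [harmonicNum_succ, add_div, hddef, hδdef]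
      have hE1 : harmonicNum2 (k+1) / HT^2 = harmonicNum2 k / HT^2 + d^2 := by
        have hk1 : ((k:ℝ)+1) ≠ 0 := by positivity
        have hHTne : HT ≠ 0 := hHTpos.ne'
        rw [harmonicNum2_succ, add_div, hddef]
        simp only [hδdef]
        congr 1
        field_simp
      rw [hτ, hH1, hE1]
      clear_value σ d W
      nlinarith [hIH, h1, p1, p2]
  -- conclude with j = T
  refine ⟨T, le_refl T, ?_⟩
  have hQ := hmain T (le_refl T)
  rw [hsT] at hQ
  have hHTT : harmonicNum T / HT = 1 := by rw [hHTdef, div_self hHTpos.ne']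
  rw [hHTT] at hQ
  rw [ge_iff_le]
  have he : (n:ℝ) * L / 8 * (harmonicNum2 T / harmonicNum T ^ 2)
      = ((n:ℝ) * L / 2 * (harmonicNum2 T / HT ^ 2)) / 4 := by rw [hHTdef]; ring
  rw [he]
  linarith [hQ]
end

section
/- There exists an absolute constant C > 0 such that, for the Frank–Wolfe algorithm run for any number of iterations T ≥ 2, the best iterate satisfies max_{0 ≤ j ≤ T} F(x(t_j)) ≥ (1/4) F(x*) − C · nL/(ln T)². -/
namespace FWProof

variable {n : ℕ}

lemma mem_box_iff (z : Fin n → ℝ) :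
    z ∈ Set.Icc (0 : Fin n → ℝ) 1 ↔ ∀ i, 0 ≤ z i ∧ z i ≤ 1 := by
  simp [Set.mem_Icc, Pi.le_def, forall_and]

lemma mem_box_segment (x d : Fin n → ℝ) (hx : x ∈ Set.Icc (0 : Fin n → ℝ) 1)
    (hxd : x + d ∈ Set.Icc (0 : Fin n → ℝ) 1) (c : ℝ) (hc0 : 0 ≤ c) (hc1 : c ≤ 1) :
    x + c • d ∈ Set.Icc (0 : Fin n → ℝ) 1 := by
  rw [mem_box_iff] at *
  intro i
  have h1 := hx i
  have h2 := hxd i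
  simp only [Pi.add_apply, Pi.smul_apply, smul_eq_mul] at *
  constructor
  · rcases le_or_gt 0 (d i) with h | h <;> nlinarith
  · rcases le_or_gt 0 (d i) with h | h <;> nlinarith

lemma le_of_forall_le_add_div (X Y c : ℝ) (hc : 0 ≤ c)
    (h : ∀ m : ℕ, 0 < m → X ≤ Y + c / m) : X ≤ Y := by
  by_contra hlt
  push_neg at hlt
  obtain ⟨m, hm⟩ := exists_nat_gt (c / (X - Y))
  have hm0 : 0 < m := by
    by_contra h0
    push_neg at h0
    interval_cases m
    have : 0 ≤ c / (X - Y) := div_nonneg hc (by linarith)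
    simp at hm; linarith
  have h1 := h m hm0
  have hXY : 0 < X - Y := by linarith
  have : c < m * (X - Y) := by rw [div_lt_iff₀ hXY] at hm; linarith
  have hmR : (0:ℝ) < m := by exact_mod_cast hm0
  have : c / m < X - Y := by rw [div_lt_iff₀ hmR]; linarith
  linarith

variable (F : (Fin n → ℝ) → ℝ) (gradF : (Fin n → ℝ) → Fin n → ℝ) (L : ℝ)

def Smooth : Prop :=
  ∀ z ∈ Set.Icc (0 : Fin n → ℝ) 1, ∀ w ∈ Set.Icc (0 : Fin n → ℝ) 1,
    |F w - F z - ∑ i, gradF z i * (w i - z i)| ≤ L / 2 * ∑ i, (w i - z i) ^ 2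

lemma single_sum (g : Fin n → ℝ) (z : Fin n → ℝ) (i : Fin n) (a : ℝ) :
    ∑ k, g k * ((z + a • (Pi.single i 1 : Fin n → ℝ)) k - z k) = a * g i := by
  have : ∀ k, (z + a • (Pi.single i 1 : Fin n → ℝ)) k - z k
      = if k = i then a else 0 := by
    intro k
    by_cases hk : k = i <;> simp [Pi.single_apply, hk]
  simp only [this, mul_ite, mul_zero]
  rw [Finset.sum_ite_eq' Finset.univ i (fun k => g k * a)]
  simp [mul_comm]

lemma single_sum_sq (z : Fin n → ℝ) (i : Fin n) (a : ℝ) :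
    ∑ k, ((z + a • (Pi.single i 1 : Fin n → ℝ)) k - z k) ^ 2 = a ^ 2 := by
  have : ∀ k, (z + a • (Pi.single i 1 : Fin n → ℝ)) k - z k
      = if k = i then a else 0 := by
    intro k
    by_cases hk : k = i <;> simp [Pi.single_apply, hk]
  have h2 : ∀ k, ((if k = i then a else 0):ℝ) ^ 2 = if k = i then a ^ 2 else 0 := by
    intro k; split <;> simp
  simp only [this, h2]
  rw [Finset.sum_ite_eq' Finset.univ i (fun _ => a ^ 2)]
  simp

lemma grad_mono (hL : 0 ≤ L) (hDR : DRSubmodular F) (hsm : Smooth F gradF L)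
    (x y : Fin n → ℝ) (hx : x ∈ Set.Icc (0 : Fin n → ℝ) 1)
    (hy : y ∈ Set.Icc (0 : Fin n → ℝ) 1) (hxy : x ≤ y) (i : Fin n) (hyi : y i < 1) :
    gradF y i ≤ gradF x i := by
  have key : ∀ a : ℝ, 0 < a → a ≤ 1 - y i → gradF y i ≤ gradF x i + L * a := by
    intro a ha0 ha1
    set e := (a • (Pi.single i 1 : Fin n → ℝ)) with he
    have hxe : x + e ∈ Set.Icc (0 : Fin n → ℝ) 1 := by
      rw [mem_box_iff] at *
      intro k
      have h1 := hx k
      have h2 := hy k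
      have h3 := hxy k
      by_cases hk : k = i
      · subst hk
        simp [he, Pi.single_apply]
        constructor <;> nlinarith
      · simp [he, Pi.single_apply, hk]
        exact h1
    have hye : y + e ∈ Set.Icc (0 : Fin n → ℝ) 1 := by
      rw [mem_box_iff] at *
      intro k
      have h2 := hy k
      by_cases hk : k = i
      · subst hk
        simp [he, Pi.single_apply]
        constructor <;> nlinarith
      · simp [he, Pi.single_apply, hk]
        exact h2
    have hdr := hDR x y hx hy hxy i a ha0 hxe hye
    have h1 := hsm x hx (x + e) hxe
    have h2 := hsm y hy (y + e) hye
    rw [single_sum, single_sum_sq] at h1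
    rw [single_sum, single_sum_sq] at h2
    rw [abs_le] at h1 h2
    have := h1.1; have := h1.2; have := h2.1; have := h2.2
    nlinarith [sq_nonneg a]
  by_contra hcon
  push_neg at hcon
  set d := gradF y i - gradF x i with hd
  have hd0 : 0 < d := by simp [hd]; linarith
  have ha : 0 < min (1 - y i) (d / (L + 1)) := by
    apply lt_min (by linarith)
    positivity
  have := key _ ha (min_le_left _ _)
  have h2 : L * min (1 - y i) (d / (L + 1)) ≤ L * (d / (L + 1)) :=
    mul_le_mul_of_nonneg_left (min_le_right _ _) hL
  have h3 : L * (d / (L + 1)) < d := by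
    rw [mul_div_assoc']
    rw [div_lt_iff₀ (by linarith)]
    nlinarith
  simp [hd] at this h2 h3
  linarith

/-- Core telescoping upper bound. -/
lemma core_upper (hL : 0 ≤ L) (hsm : Smooth F gradF L) (x d : Fin n → ℝ) (B : ℝ)
    (hx : x ∈ Set.Icc (0 : Fin n → ℝ) 1) (hxd : x + d ∈ Set.Icc (0 : Fin n → ℝ) 1)
    (hB : ∀ c : ℝ, 0 ≤ c → c < 1 → ∑ i, gradF (x + c • d) i * d i ≤ B) :
    F (x + d) ≤ F x + B := by
  set S := ∑ i, d i ^ 2 with hS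
  have hS0 : 0 ≤ S := Finset.sum_nonneg (fun i _ => sq_nonneg _)
  apply le_of_forall_le_add_div _ _ (L / 2 * S) (by positivity)
  intro m hm
  have hmR : (0:ℝ) < m := by exact_mod_cast hm
  have key : ∀ k : ℕ, k ≤ m →
      F (x + ((k : ℝ) / m) • d) ≤ F x + (k : ℝ) / m * B + (k : ℝ) * (L / 2 * S) / m ^ 2 := by
    intro k
    induction k with
    | zero => intro _; simp
    | succ k ih =>
      intro hk1
      push_cast
      have hkm : k < m := hk1
      have ihv := ih (le_of_lt hkm)
      set c : ℝ := (k : ℝ) / m with hc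
      set c' : ℝ := ((k : ℝ) + 1) / m with hc'
      have hc0 : 0 ≤ c := by positivity
      have hc1 : c < 1 := by rw [hc, div_lt_one hmR]; exact_mod_cast hkm
      have hc'0 : 0 ≤ c' := by positivity
      have hc'1 : c' ≤ 1 := by
        rw [hc', div_le_one hmR]
        have : (k : ℝ) + 1 ≤ m := by exact_mod_cast hk1
        linarith
      have hz : x + c • d ∈ Set.Icc (0 : Fin n → ℝ) 1 :=
        mem_box_segment x d hx hxd c hc0 (le_of_lt hc1)
      have hz' : x + c' • d ∈ Set.Icc (0 : Fin n → ℝ) 1 :=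
        mem_box_segment x d hx hxd c' hc'0 hc'1
      have hdiff : ∀ i, (x + c' • d) i - (x + c • d) i = d i / m := by
        intro i
        simp only [Pi.add_apply, Pi.smul_apply, smul_eq_mul, hc, hc']
        field_simp
        ring
      have hsum1 : ∑ i, gradF (x + c • d) i * ((x + c' • d) i - (x + c • d) i)
          = (∑ i, gradF (x + c • d) i * d i) / m := by
        rw [Finset.sum_div]
        exact Finset.sum_congr rfl (fun i _ => by rw [hdiff i, mul_div_assoc])
      have hsum2 : ∑ i, ((x + c' • d) i - (x + c • d) i) ^ 2 = S / m ^ 2 := by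
        rw [hS, Finset.sum_div]
        exact Finset.sum_congr rfl (fun i _ => by rw [hdiff i, div_pow])
      have hs := hsm _ hz _ hz'
      rw [hsum1, hsum2, abs_le] at hs
      have hs2 := hs.2
      have hBc := hB c hc0 hc1
      have hdivB : (∑ i, gradF (x + c • d) i * d i) / m ≤ B / m :=
        (div_le_div_iff_of_pos_right hmR).mpr hBc
      have hstep : F (x + c' • d) ≤ F (x + c • d) + B / m + L / 2 * S / m ^ 2 := by
        have := hs.2
        rw [← mul_div_assoc] at this
        linarith
      have hcast : ((k : ℝ) + 1) / m * B = (k : ℝ) / m * B + B / m := by ring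
      calc F (x + c' • d) ≤ F (x + c • d) + B / m + L / 2 * S / m ^ 2 := hstep
        _ ≤ (F x + (k : ℝ) / m * B + (k : ℝ) * (L / 2 * S) / m ^ 2) + B / m
            + L / 2 * S / m ^ 2 := by linarith
        _ = F x + ((k : ℝ) + 1) / m * B + ((k : ℝ) + 1) * (L / 2 * S) / m ^ 2 := by
            ring
      
  have := key m le_rfl
  rw [div_self (ne_of_gt hmR), one_smul] at this
  have heq : (m : ℝ) * (L / 2 * S) / m ^ 2 = L / 2 * S / m := by
    field_simp
  rw [heq] at this
  linarith

lemma core_lower (hL : 0 ≤ L) (hsm : Smooth F gradF L) (x d : Fin n → ℝ) (B : ℝ)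
    (hx : x ∈ Set.Icc (0 : Fin n → ℝ) 1) (hxd : x + d ∈ Set.Icc (0 : Fin n → ℝ) 1)
    (hB : ∀ c : ℝ, 0 ≤ c → c < 1 → B ≤ ∑ i, gradF (x + c • d) i * d i) :
    F x + B ≤ F (x + d) := by
  have hsm' : Smooth (fun z => -F z) (fun z i => -gradF z i) L := by
    intro z hz w hw
    have h := hsm z hz w hw
    have heq : -F w - -F z - ∑ i, -gradF z i * (w i - z i)
        = -(F w - F z - ∑ i, gradF z i * (w i - z i)) := by
      simp [neg_mul, Finset.sum_neg_distrib]
      ring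
    rw [heq, abs_neg]
    exact h
  have := core_upper (fun z => -F z) (fun z i => -gradF z i) L hL hsm' x d (-B) hx hxd ?_
  · linarith
  · intro c hc0 hc1
    have := hB c hc0 hc1
    simp only [neg_mul, Finset.sum_neg_distrib]
    linarith

lemma concave_upper (hL : 0 ≤ L) (hDR : DRSubmodular F) (hsm : Smooth F gradF L)
    (x d : Fin n → ℝ) (hd : ∀ i, 0 ≤ d i)
    (hx : x ∈ Set.Icc (0 : Fin n → ℝ) 1) (hxd : x + d ∈ Set.Icc (0 : Fin n → ℝ) 1) :
    F (x + d) ≤ F x + ∑ i, gradF x i * d i := by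
  apply core_upper F gradF L hL hsm x d _ hx hxd
  intro c hc0 hc1
  apply Finset.sum_le_sum
  intro i _
  rcases (hd i).eq_or_lt with h | h
  · rw [← h]; simp
  · have hzmem := mem_box_segment x d hx hxd c hc0 (le_of_lt hc1)
    have hle : x ≤ x + c • d := by
      intro k
      simp only [Pi.add_apply, Pi.smul_apply, smul_eq_mul]
      nlinarith [hd k]
    have htop : (x + d) i ≤ 1 := ((mem_box_iff _).mp hxd i).2
    have hlt : (x + c • d) i < 1 := by
      simp only [Pi.add_apply, Pi.smul_apply, smul_eq_mul] at *
      nlinarith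
    exact mul_le_mul_of_nonneg_right
      (grad_mono F gradF L hL hDR hsm x (x + c • d) hx hzmem hle i hlt) (le_of_lt h)

lemma concave_lower (hL : 0 ≤ L) (hDR : DRSubmodular F) (hsm : Smooth F gradF L)
    (x d : Fin n → ℝ) (hd : ∀ i, 0 ≤ d i)
    (hx : x ∈ Set.Icc (0 : Fin n → ℝ) 1) (hxd : x + d ∈ Set.Icc (0 : Fin n → ℝ) 1)
    (hstrict : ∀ i, 0 < d i → (x + d) i < 1) :
    F x + ∑ i, gradF (x + d) i * d i ≤ F (x + d) := by
  apply core_lower F gradF L hL hsm x d _ hx hxd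
  intro c hc0 hc1
  apply Finset.sum_le_sum
  intro i _
  rcases (hd i).eq_or_lt with h | h
  · rw [← h]; simp
  · have hzmem := mem_box_segment x d hx hxd c hc0 (le_of_lt hc1)
    have hle : x + c • d ≤ x + d := by
      intro k
      simp only [Pi.add_apply, Pi.smul_apply, smul_eq_mul]
      nlinarith [hd k]
    exact mul_le_mul_of_nonneg_right
      (grad_mono F gradF L hL hDR hsm (x + c • d) (x + d) hzmem hxd hle i (hstrict i h))
      (le_of_lt h)

lemma concave_upper_neg (hL : 0 ≤ L) (hDR : DRSubmodular F) (hsm : Smooth F gradF L)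
    (x d : Fin n → ℝ) (hd : ∀ i, d i ≤ 0)
    (hx : x ∈ Set.Icc (0 : Fin n → ℝ) 1) (hxd : x + d ∈ Set.Icc (0 : Fin n → ℝ) 1)
    (hstrict : ∀ i, d i < 0 → x i < 1) :
    F (x + d) ≤ F x + ∑ i, gradF x i * d i := by
  apply core_upper F gradF L hL hsm x d _ hx hxd
  intro c hc0 hc1
  apply Finset.sum_le_sum
  intro i _
  rcases (hd i).lt_or_eq with h | h
  · have hzmem := mem_box_segment x d hx hxd c hc0 (le_of_lt hc1)
    have hle : x + c • d ≤ x := by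
      intro k
      simp only [Pi.add_apply, Pi.smul_apply, smul_eq_mul]
      nlinarith [hd k]
    exact mul_le_mul_of_nonpos_right
      (grad_mono F gradF L hL hDR hsm (x + c • d) x hzmem hx hle i (hstrict i h))
      (le_of_lt h)
  · rw [h]; simp

lemma join_ge (hL : 0 ≤ L) (hDR : DRSubmodular F) (hsm : Smooth F gradF L)
    (hF0 : ∀ z ∈ Set.Icc (0 : Fin n → ℝ) 1, 0 ≤ F z)
    (p z : Fin n → ℝ) (θ : ℝ) (hp : p ∈ Set.Icc (0 : Fin n → ℝ) 1)
    (hz : z ∈ Set.Icc (0 : Fin n → ℝ) 1) (hθ0 : 0 ≤ θ) (hθh : θ ≤ 1/2)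
    (hzθ : ∀ i, z i ≤ θ) :
    (1 - θ) * F p ≤ F (fun i => max (z i) (p i)) := by
  rw [mem_box_iff] at hp hz
  rcases hθ0.eq_or_lt with hθ | hθ
  · -- θ = 0 : z = 0, max z p = p
    have hzz : ∀ i, z i = 0 := fun i => le_antisymm (hθ ▸ hzθ i) (hz i).1
    have : (fun i => max (z i) (p i)) = p := by
      funext i; rw [hzz i]; exact max_eq_right (hp i).1
    rw [this, ← hθ]
    simp
  · set d : Fin n → ℝ := fun i => max (z i) (p i) - p i with hdd
    have hd0 : ∀ i, 0 ≤ d i := fun i => by simp [hdd, le_max_right]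
    have hpd : p + d = fun i => max (z i) (p i) := by funext i; simp [hdd]
    have hdle : ∀ i, d i ≤ θ * (1 - p i) := by
      intro i
      rcases le_or_gt (z i) (p i) with h | h
      · simp [hdd, max_eq_right h]
        nlinarith [(hp i).2, (hp i).1]
      · simp [hdd, max_eq_left (le_of_lt h)]
        have := hzθ i
        nlinarith [(hp i).1]
    have hpdbox : p + d ∈ Set.Icc (0 : Fin n → ℝ) 1 := by
      rw [mem_box_iff]
      intro i
      rw [hpd]
      constructor
      · exact le_max_of_le_right (hp i).1
      · exact max_le (le_trans (hzθ i) (by linarith)) (hp i).2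
    have hpbox : p ∈ Set.Icc (0 : Fin n → ℝ) 1 := by rw [mem_box_iff]; exact hp
    -- A ≤ F (p+d) - F p
    have h1 : F p + ∑ i, gradF (p + d) i * d i ≤ F (p + d) := by
      apply concave_lower F gradF L hL hDR hsm p d hd0 hpbox hpdbox
      intro i hdi
      have : p i < z i := by
        by_contra hc
        push_neg at hc
        simp [hdd, max_eq_right hc] at hdi
      rw [hpd]
      simp only []
      calc max (z i) (p i) = z i := max_eq_left (le_of_lt this)
        _ ≤ θ := hzθ i
        _ < 1 := by linarith
    set A := ∑ i, gradF (p + d) i * d i with hA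
    -- upper step from p+d by (1/θ - 1) • d
    set d' : Fin n → ℝ := (1/θ - 1) • d with hd'
    have hcoef : 0 ≤ 1/θ - 1 := by
      rw [sub_nonneg, le_div_iff₀ hθ]; linarith
    have htop : (p + d) + d' ∈ Set.Icc (0 : Fin n → ℝ) 1 := by
      rw [mem_box_iff]
      intro i
      have hdl := hdle i
      have h0 := hd0 i
      have hppd := (mem_box_iff _).mp hpdbox i
      simp only [Pi.add_apply] at hppd
      constructor
      · simp only [Pi.add_apply, hd', Pi.smul_apply, smul_eq_mul]
        have hmn : 0 ≤ (1/θ - 1) * d i := mul_nonneg hcoef h0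
        exact add_nonneg hppd.1 hmn
      · simp only [Pi.add_apply, hd', Pi.smul_apply, smul_eq_mul]
        have hθ' : (1/θ) * θ = 1 := by field_simp
        have h6 : (1/θ) * d i ≤ (1/θ) * (θ * (1 - p i)) :=
          mul_le_mul_of_nonneg_left hdl (by positivity)
        nlinarith [(hp i).2]
    have h2 : F ((p + d) + d') ≤ F (p + d) + (1/θ - 1) * A := by
      have := concave_upper F gradF L hL hDR hsm (p + d) d'
        (fun i => by
          simp only [hd', Pi.smul_apply, smul_eq_mul]
          exact mul_nonneg hcoef (hd0 i)) hpdbox htop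
      have hsum : ∑ i, gradF (p + d) i * d' i = (1/θ - 1) * A := by
        rw [hA, Finset.mul_sum]
        exact Finset.sum_congr rfl (fun i _ => by simp [hd']; ring)
      rw [hsum] at this
      exact this
    have h3 : 0 ≤ F ((p + d) + d') := hF0 _ htop
    have h4 : 0 ≤ F p := hF0 _ hpbox
    -- combine: 0 ≤ F(p+d) + (1/θ-1)*A, A ≤ F(p+d) - F p
    rw [← hpd]
    have hAle : A ≤ F (p + d) - F p := by linarith
    have h5 : 0 ≤ F (p + d) + (1/θ - 1) * (F (p + d) - F p) := by
      nlinarith [mul_le_mul_of_nonneg_left hAle hcoef]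
    have h7 : 0 ≤ θ * (F (p + d) + (1/θ - 1) * (F (p + d) - F p)) := mul_nonneg hθ.le h5
    have h8 : θ * (F (p + d) + (1/θ - 1) * (F (p + d) - F p))
        = F (p + d) - (1 - θ) * F p := by
      field_simp
      ring
    linarith
  
noncomputable def sFW (T j : ℕ) : ℝ := Real.log (1 + harmonicNum j / harmonicNum T)

lemma harmonicNum_nonneg (j : ℕ) : 0 ≤ harmonicNum j :=
  Finset.sum_nonneg fun k _ => by positivity

lemma harmonicNum_succ (k : ℕ) : harmonicNum (k + 1) = harmonicNum k + 1 / ((k : ℝ) + 1) := by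
  rw [harmonicNum, Finset.sum_range_succ]; rfl

lemma harmonicNum_mono : Monotone harmonicNum := by
  intro a b hab
  rw [harmonicNum, harmonicNum]
  exact Finset.sum_le_sum_of_subset_of_nonneg (Finset.range_subset_range.mpr hab)
    (fun k _ _ => by positivity)

lemma one_le_harmonicNum (T : ℕ) (hT : 1 ≤ T) : 1 ≤ harmonicNum T := by
  have h1 : harmonicNum 1 = 1 := by simp [harmonicNum]
  calc (1:ℝ) = harmonicNum 1 := h1.symm
    _ ≤ harmonicNum T := harmonicNum_mono hT

lemma harmonicNum_pos (T : ℕ) (hT : 1 ≤ T) : 0 < harmonicNum T :=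
  lt_of_lt_of_le one_pos (one_le_harmonicNum T hT)

lemma log_le_harmonicNum (T : ℕ) : Real.log T ≤ harmonicNum T := by
  have h1 : Real.log ((T : ℝ) + 1) ≤ (harmonic T : ℝ) := by
    have := log_add_one_le_harmonic T
    push_cast at this
    exact this
  have h2 : (harmonic T : ℝ) = harmonicNum T := by
    rw [harmonic, harmonicNum]
    push_cast
    exact Finset.sum_congr rfl (fun k _ => by rw [one_div])
  have h3 : Real.log T ≤ Real.log ((T : ℝ) + 1) := by
    rcases Nat.eq_zero_or_pos T with h | h
    · subst h; norm_num
    · apply Real.log_le_log (by exact_mod_cast h) (by linarith)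
  linarith

lemma sum_inv_sq_le (m : ℕ) : ∑ j ∈ Finset.range m, (1 / ((j : ℝ) + 1)) ^ 2 ≤ 2 := by
  have key : ∀ m : ℕ, ∑ j ∈ Finset.range m, (1 / ((j : ℝ) + 1)) ^ 2 ≤ 2 - 2 / ((m : ℝ) + 1) := by
    intro m
    induction m with
    | zero => simp
    | succ m ih =>
      rw [Finset.sum_range_succ]
      have hm : (0:ℝ) < (m : ℝ) + 1 := by positivity
      have hm2 : (0:ℝ) < (m : ℝ) + 2 := by positivity
      have hstep : (1 / ((m : ℝ) + 1)) ^ 2 ≤ 2 / ((m : ℝ) + 1) - 2 / ((m : ℝ) + 2) := by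
        rw [div_sub_div _ _ (ne_of_gt hm) (ne_of_gt hm2), div_pow, one_pow,
          div_le_div_iff₀ (by positivity) (by positivity)]
        ring_nf
        nlinarith [sq_nonneg ((m:ℝ)+1)]
      push_cast
      calc _ ≤ (2 - 2 / ((m : ℝ) + 1)) + (2 / ((m : ℝ) + 1) - 2 / ((m : ℝ) + 2)) := by
            push_cast at ih ⊢; linarith
        _ = 2 - 2 / ((m : ℝ) + 1 + 1) := by ring_nf
  calc ∑ j ∈ Finset.range m, (1 / ((j : ℝ) + 1)) ^ 2 ≤ 2 - 2 / ((m : ℝ) + 1) := key m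
    _ ≤ 2 := by
        have : (0:ℝ) ≤ 2 / ((m : ℝ) + 1) := by positivity
        linarith

variable {T : ℕ}

lemma sFW_nonneg (hT : 1 ≤ T) (j : ℕ) : 0 ≤ sFW T j := by
  apply Real.log_nonneg
  have := harmonicNum_nonneg j
  have := harmonicNum_pos T hT
  have : 0 ≤ harmonicNum j / harmonicNum T := by positivity
  linarith

lemma sFW_mono (hT : 1 ≤ T) {j k : ℕ} (hjk : j ≤ k) : sFW T j ≤ sFW T k := by
  apply Real.log_le_log
  · have := harmonicNum_nonneg j
    have := harmonicNum_pos T hT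
    positivity
  · have := harmonicNum_pos T hT
    have := harmonicNum_mono hjk
    gcongr

lemma sFW_zero : sFW T 0 = 0 := by
  simp [sFW, harmonicNum]

lemma sFW_self (hT : 1 ≤ T) : sFW T T = Real.log 2 := by
  rw [sFW, div_self (ne_of_gt (harmonicNum_pos T hT))]
  norm_num

lemma sFW_le_log2 (hT : 1 ≤ T) {j : ℕ} (hj : j ≤ T) : sFW T j ≤ Real.log 2 := by
  rw [← sFW_self hT]; exact sFW_mono hT hj

lemma log2_lt_one : Real.log 2 < 1 := by
  have := Real.log_two_lt_d9
  linarith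

lemma one_div_one_add_fwTime (hT : 1 ≤ T) {j : ℕ} (hj : j ≤ T) :
    1 / (1 + fwTime T j) = 1 - sFW T j := by
  have h1 : sFW T j < 1 := lt_of_le_of_lt (sFW_le_log2 hT hj) log2_lt_one
  have h2 : 1 - sFW T j ≠ 0 := by linarith
  rw [fwTime]
  have : Real.log (1 + harmonicNum j / harmonicNum T) = sFW T j := rfl
  rw [this]
  rw [show 1 + (1 / (1 - sFW T j) - 1) = 1 / (1 - sFW T j) by ring, one_div_one_div]

lemma fwRatio_eq (hT : 1 ≤ T) {j : ℕ} (hj : j < T) :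
    fwRatio T j = Real.exp (sFW T j - sFW T (j + 1)) := by
  rw [fwRatio, one_div_one_add_fwTime hT (le_of_lt hj), one_div_one_add_fwTime hT hj]
  congr 1
  ring

lemma sFW_diff_le (hT : 1 ≤ T) (k : ℕ) :
    sFW T (k + 1) - sFW T k ≤ 1 / (((k : ℝ) + 1) * harmonicNum T) := by
  have hHT := harmonicNum_pos T hT
  have hHk := harmonicNum_nonneg k
  set A : ℝ := 1 + harmonicNum (k + 1) / harmonicNum T with hA
  set B : ℝ := 1 + harmonicNum k / harmonicNum T with hB
  have hApos : 0 < A := by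
    have := harmonicNum_nonneg (k + 1); rw [hA]; positivity
  have hBpos : 0 < B := by rw [hB]; positivity
  have hB1 : 1 ≤ B := by
    rw [hB]; have : 0 ≤ harmonicNum k / harmonicNum T := by positivity
    linarith
  have hAB : A - B = 1 / (((k : ℝ) + 1) * harmonicNum T) := by
    rw [hA, hB, harmonicNum_succ]
    field_simp
    ring
  have h1 : sFW T (k + 1) - sFW T k = Real.log (A / B) := by
    rw [sFW, sFW, ← hA, ← hB, Real.log_div (ne_of_gt hApos) (ne_of_gt hBpos)]
  have h2 : Real.log (A / B) ≤ A / B - 1 :=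
    Real.log_le_sub_one_of_pos (div_pos hApos hBpos)
  have h3 : A / B - 1 = (A - B) / B := by field_simp
  have h4 : (A - B) / B ≤ A - B := by
    apply div_le_self _ hB1
    rw [hAB]; positivity
  rw [h1, ← hAB]
  linarith


end FWProof


set_option maxHeartbeats 2000000 in
/-- There is an absolute constant `C > 0` such that for every run of the
Frank–Wolfe algorithm with `T ≥ 2` iterations,
`max_{0 ≤ j ≤ T} F(x(t_j)) ≥ (1/4) F(x*) - C n L / (ln T)²`. -/
theorem fw_best_iterate_log_bound :
    ∃ C : ℝ, 0 < C ∧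
      ∀ (n : ℕ) (F : (Fin n → ℝ) → ℝ) (gradF : (Fin n → ℝ) → Fin n → ℝ) (L : ℝ),
        0 ≤ L →
        (∀ z ∈ Set.Icc (0 : Fin n → ℝ) 1, 0 ≤ F z) →
        DRSubmodular F →
        HasGradientOnBox F gradF →
        (∀ z ∈ Set.Icc (0 : Fin n → ℝ) 1, ∀ w ∈ Set.Icc (0 : Fin n → ℝ) 1,
          |F w - F z - ∑ i, gradF z i * (w i - z i)| ≤ L / 2 * ∑ i, (w i - z i) ^ 2) →
        F 0 = 0 →
        ∀ P : Set (Fin n → ℝ), P ⊆ Set.Icc 0 1 → Convex ℝ P → (0 : Fin n → ℝ) ∈ P →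
        ∀ xstar ∈ P, (∀ z ∈ P, F z ≤ F xstar) →
        ∀ T : ℕ, 2 ≤ T →
        ∀ x v : ℕ → Fin n → ℝ,
          x 0 = 0 →
          (∀ j < T, v j ∈ P) →
          (∀ j < T, ∀ w ∈ P, ∑ i, gradF (x j) i * w i ≤ ∑ i, gradF (x j) i * v j i) →
          (∀ j < T, x (j + 1) = fwRatio T j • x j + (1 - fwRatio T j) • v j) →
          ∃ j ≤ T, F (x j) ≥ 1 / 4 * F xstar - C * (n : ℝ) * L / Real.log T ^ 2 := by
  refine ⟨1, one_pos, ?_⟩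
  intro n F gradF L hL hF0 hDR _hgrad hsm hF00 P hPbox _hPconv hP0 xstar hxsP _hxsmax
    T hT x v hx0 hvP hLMO hrec
  have hT1 : 1 ≤ T := le_trans (by norm_num) hT
  have hHT := FWProof.harmonicNum_pos T hT1
  have hxsbox : xstar ∈ Set.Icc (0 : Fin n → ℝ) 1 := hPbox hxsP
  have hFstar0 : 0 ≤ F xstar := hF0 _ hxsbox
  have hxscomp := (FWProof.mem_box_iff xstar).mp hxsbox
  have hsmooth : FWProof.Smooth F gradF L := hsm
  -- main induction
  have key : ∀ j, j ≤ T →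
      x j ∈ Set.Icc (0 : Fin n → ℝ) 1 ∧
      (∀ i, x j i ≤ 1 - Real.exp (-(FWProof.sFW T j))) ∧
      (Real.exp (-(FWProof.sFW T j)) - Real.exp (-(FWProof.sFW T j)) ^ 2) * F xstar
        - L * n / 2 * (∑ k ∈ Finset.range j, (FWProof.sFW T (k + 1) - FWProof.sFW T k) ^ 2)
        ≤ F (x j) := by
    intro j
    induction j with
    | zero =>
      intro _
      rw [hx0]
      refine ⟨?_, ?_, ?_⟩
      · rw [FWProof.mem_box_iff]; intro i; norm_num
      · intro i
        rw [FWProof.sFW_zero]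
        norm_num
      · rw [FWProof.sFW_zero, hF00]
        norm_num
    | succ j ih =>
      intro hj1
      have hjT : j < T := hj1
      obtain ⟨hbox, hzle, hFlb⟩ := ih (le_of_lt hjT)
      have hzcomp := (FWProof.mem_box_iff (x j)).mp hbox
      set r : ℝ := fwRatio T j with hrdef
      set δ : ℝ := FWProof.sFW T (j + 1) - FWProof.sFW T j with hδdef
      have hδ0 : 0 ≤ δ := by
        rw [hδdef]
        have := FWProof.sFW_mono (T := T) hT1 (Nat.le_succ j)
        linarith
      have hδlog2 : δ ≤ Real.log 2 := by
        rw [hδdef]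
        have h1 := FWProof.sFW_le_log2 hT1 hj1
        have h2 := FWProof.sFW_nonneg (T := T) hT1 j
        linarith
      have hrexp : r = Real.exp (-δ) := by
        rw [hrdef, FWProof.fwRatio_eq hT1 hjT, hδdef]
        congr 1
        ring
      have hr0 : 0 < r := by rw [hrexp]; exact Real.exp_pos _
      have hr1 : r ≤ 1 := by
        rw [hrexp]
        exact Real.exp_le_one_iff.mpr (by linarith)
      have hrhalf : 1 / 2 ≤ r := by
        rw [hrexp]
        have h1 : Real.exp (-Real.log 2) ≤ Real.exp (-δ) :=
          Real.exp_le_exp.mpr (by linarith)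
        rw [Real.exp_neg, Real.exp_log two_pos] at h1
        linarith
      have h1r : 1 - r ≤ δ := by
        rw [hrexp]
        have := Real.add_one_le_exp (-δ)
        linarith
      set u : ℝ := Real.exp (-(FWProof.sFW T j)) with hu
      have huhalf : 1 / 2 ≤ u := by
        rw [hu]
        have h1 : Real.exp (-Real.log 2) ≤ Real.exp (-(FWProof.sFW T j)) :=
          Real.exp_le_exp.mpr (by linarith [FWProof.sFW_le_log2 hT1 (le_of_lt hjT)])
        rw [Real.exp_neg, Real.exp_log two_pos] at h1
        linarith
      have hu1 : u ≤ 1 := by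
        rw [hu]
        exact Real.exp_le_one_iff.mpr (by linarith [FWProof.sFW_nonneg (T := T) hT1 j])
      have hu' : Real.exp (-(FWProof.sFW T (j + 1))) = u * r := by
        rw [hu, hrexp, ← Real.exp_add]
        congr 1
        rw [hδdef]
        ring
      have hvbox : v j ∈ Set.Icc (0 : Fin n → ℝ) 1 := hPbox (hvP j hjT)
      have hvcomp := (FWProof.mem_box_iff (v j)).mp hvbox
      have hcomp : ∀ i, x (j + 1) i = r * x j i + (1 - r) * v j i := by
        intro i
        rw [hrec j hjT]
        simp [hrdef]
      have hbox' : x (j + 1) ∈ Set.Icc (0 : Fin n → ℝ) 1 := by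
        rw [FWProof.mem_box_iff]
        intro i
        rw [hcomp i]
        constructor
        · nlinarith [(hzcomp i).1, (hvcomp i).1]
        · nlinarith [(hzcomp i).2, (hvcomp i).2]
      have hle' : ∀ i, x (j + 1) i ≤ 1 - Real.exp (-(FWProof.sFW T (j + 1))) := by
        intro i
        rw [hu', hcomp i]
        nlinarith [hzle i, (hvcomp i).2]
      refine ⟨hbox', hle', ?_⟩
      -- the function-value recursion
      set g : Fin n → ℝ := gradF (x j) with hg
      set dJ : Fin n → ℝ := fun i => max (x j i) (xstar i) - x j i with hdJ
      set dM : Fin n → ℝ := fun i => min (x j i) (xstar i) - x j i with hdM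
      have hdJ0 : ∀ i, 0 ≤ dJ i := fun i => by simp [hdJ, le_max_left]
      have hdM0 : ∀ i, dM i ≤ 0 := fun i => by simp [hdM, min_le_left]
      have hJbox : x j + dJ ∈ Set.Icc (0 : Fin n → ℝ) 1 := by
        rw [FWProof.mem_box_iff]
        intro i
        simp only [Pi.add_apply, hdJ]
        constructor
        · have := (hzcomp i).1; have := (hxscomp i).1
          rcases max_cases (x j i) (xstar i) with ⟨h, _⟩ | ⟨h, _⟩ <;> rw [h] <;> linarith
        · have := (hzcomp i).2; have := (hxscomp i).2
          rcases max_cases (x j i) (xstar i) with ⟨h, _⟩ | ⟨h, _⟩ <;> rw [h] <;> linarith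
      have hMbox : x j + dM ∈ Set.Icc (0 : Fin n → ℝ) 1 := by
        rw [FWProof.mem_box_iff]
        intro i
        simp only [Pi.add_apply, hdM]
        constructor
        · have := (hzcomp i).1; have := (hxscomp i).1
          rcases min_cases (x j i) (xstar i) with ⟨h, _⟩ | ⟨h, _⟩ <;> rw [h] <;> linarith
        · have := (hzcomp i).2; have := (hxscomp i).2
          rcases min_cases (x j i) (xstar i) with ⟨h, _⟩ | ⟨h, _⟩ <;> rw [h] <;> linarith
      have h_up : F (x j + dJ) ≤ F (x j) + ∑ i, g i * dJ i :=
        FWProof.concave_upper F gradF L hL hDR hsmooth (x j) dJ hdJ0 hbox hJbox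
      have h_neg : F (x j + dM) ≤ F (x j) + ∑ i, g i * dM i := by
        apply FWProof.concave_upper_neg F gradF L hL hDR hsmooth (x j) dM hdM0 hbox hMbox
        intro i _
        have := hzle i
        linarith [huhalf]
      have hJtop : (x j + dJ) = fun i => max (x j i) (xstar i) := by
        funext i; simp [hdJ]
      have h_join : u * F xstar ≤ F (x j + dJ) := by
        have hj2 := FWProof.join_ge F gradF L hL hDR hsmooth hF0 xstar (x j) (1 - u)
          hxsbox hbox (by linarith) (by linarith) (fun i => hzle i)
        rw [show (1 : ℝ) - (1 - u) = u by ring] at hj2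
        rw [hJtop]
        exact hj2
      have h_meet0 : 0 ≤ F (x j + dM) := hF0 _ hMbox
      have hsplit : ∑ i, g i * dJ i + ∑ i, g i * dM i = ∑ i, g i * (xstar i - x j i) := by
        rw [← Finset.sum_add_distrib]
        apply Finset.sum_congr rfl
        intro i _
        have hmm : dJ i + dM i = xstar i - x j i := by
          simp only [hdJ, hdM]
          have := max_add_min (x j i) (xstar i)
          linarith
        rw [← mul_add, hmm]
      have hlmo : ∑ i, g i * xstar i ≤ ∑ i, g i * v j i := hLMO j hjT xstar hxsP
      have hsum_xstar : ∑ i, g i * (xstar i - x j i) ≤ ∑ i, g i * (v j i - x j i) := by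
        simp only [mul_sub, Finset.sum_sub_distrib]
        linarith
      -- smoothness step
      have hS := hsm (x j) hbox (x (j + 1)) hbox'
      have hgsum : ∑ i, gradF (x j) i * (x (j + 1) i - x j i)
          = (1 - r) * ∑ i, g i * (v j i - x j i) := by
        rw [Finset.mul_sum]
        apply Finset.sum_congr rfl
        intro i _
        rw [hcomp i, hg]
        ring
      have hsq : ∑ i, (x (j + 1) i - x j i) ^ 2 ≤ n * δ ^ 2 := by
        calc ∑ i, (x (j + 1) i - x j i) ^ 2 ≤ ∑ _i : Fin n, δ ^ 2 := by
              apply Finset.sum_le_sum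
              intro i _
              rw [hcomp i]
              have hh : r * x j i + (1 - r) * v j i - x j i = (1 - r) * (v j i - x j i) := by
                ring
              rw [hh, mul_pow]
              have hvz : (v j i - x j i) ^ 2 ≤ 1 := by
                nlinarith [(hvcomp i).1, (hvcomp i).2, (hzcomp i).1, (hzcomp i).2]
              have h2 : (1 - r) ^ 2 ≤ δ ^ 2 := by nlinarith
              nlinarith [sq_nonneg (1 - r), sq_nonneg (v j i - x j i)]
          _ = n * δ ^ 2 := by
              rw [Finset.sum_const, Finset.card_univ, Fintype.card_fin, nsmul_eq_mul]
      have hstep0 : F (x j) + (1 - r) * (∑ i, g i * (v j i - x j i))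
          - L / 2 * (n * δ ^ 2) ≤ F (x (j + 1)) := by
        have habs := (abs_le.mp hS).1
        rw [hgsum] at habs
        have hLds : L / 2 * (∑ i, (x (j + 1) i - x j i) ^ 2) ≤ L / 2 * (n * δ ^ 2) :=
          mul_le_mul_of_nonneg_left hsq (by positivity)
        linarith
      have hA : u * F xstar - 2 * F (x j) ≤ ∑ i, g i * (v j i - x j i) := by
        linarith
      have hstepA : (1 - r) * (u * F xstar - 2 * F (x j))
          ≤ (1 - r) * (∑ i, g i * (v j i - x j i)) :=
        mul_le_mul_of_nonneg_left hA (by linarith)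
      -- combine
      rw [Finset.sum_range_succ, hu', ← hδdef]
      have hD0 : 0 ≤ ∑ k ∈ Finset.range j, (FWProof.sFW T (k + 1) - FWProof.sFW T k) ^ 2 :=
        Finset.sum_nonneg fun k _ => sq_nonneg _
      have hLn : (0 : ℝ) ≤ L * n / 2 := by positivity
      have h2r : (0 : ℝ) ≤ 2 * r - 1 := by linarith
      have hc1 : (2 * r - 1) * ((u - u ^ 2) * F xstar
            - L * n / 2 * (∑ k ∈ Finset.range j, (FWProof.sFW T (k + 1) - FWProof.sFW T k) ^ 2))
          ≤ (2 * r - 1) * F (x j) := mul_le_mul_of_nonneg_left hFlb h2r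
      have hint1 : 0 ≤ F xstar * (u * (1 - r)) ^ 2 := mul_nonneg hFstar0 (sq_nonneg _)
      have hint2 : 0 ≤ (1 - r) * (L * n / 2
          * (∑ k ∈ Finset.range j, (FWProof.sFW T (k + 1) - FWProof.sFW T k) ^ 2)) :=
        mul_nonneg (by linarith) (mul_nonneg hLn hD0)
      nlinarith [hstep0, hstepA, hc1, hint1, hint2]
  -- conclusion
  obtain ⟨_, _, hfin⟩ := key T le_rfl
  refine ⟨T, le_rfl, ?_⟩
  have huT : Real.exp (-(FWProof.sFW T T)) = 1 / 2 := by
    rw [FWProof.sFW_self hT1, Real.exp_neg, Real.exp_log two_pos]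
    norm_num
  rw [huT] at hfin
  have hD : ∑ k ∈ Finset.range T, (FWProof.sFW T (k + 1) - FWProof.sFW T k) ^ 2
      ≤ 2 / harmonicNum T ^ 2 := by
    calc ∑ k ∈ Finset.range T, (FWProof.sFW T (k + 1) - FWProof.sFW T k) ^ 2
        ≤ ∑ k ∈ Finset.range T, (1 / ((k : ℝ) + 1)) ^ 2 * (1 / harmonicNum T ^ 2) := by
          apply Finset.sum_le_sum
          intro k _
          have h0 : 0 ≤ FWProof.sFW T (k + 1) - FWProof.sFW T k := by
            have := FWProof.sFW_mono (T := T) hT1 (Nat.le_succ k)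
            linarith
          have h1 := FWProof.sFW_diff_le hT1 k
          have h2 : (FWProof.sFW T (k + 1) - FWProof.sFW T k) ^ 2
              ≤ (1 / (((k : ℝ) + 1) * harmonicNum T)) ^ 2 := by
            apply pow_le_pow_left₀ h0 h1
          have h3 : (1 / (((k : ℝ) + 1) * harmonicNum T)) ^ 2
              = (1 / ((k : ℝ) + 1)) ^ 2 * (1 / harmonicNum T ^ 2) := by
            field_simp
          rw [← h3]
          exact h2
      _ = (∑ k ∈ Finset.range T, (1 / ((k : ℝ) + 1)) ^ 2) * (1 / harmonicNum T ^ 2) := by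
          rw [← Finset.sum_mul]
      _ ≤ 2 * (1 / harmonicNum T ^ 2) := by
          apply mul_le_mul_of_nonneg_right (FWProof.sum_inv_sq_le T) (by positivity)
      _ = 2 / harmonicNum T ^ 2 := by ring
  have hlogpos : 0 < Real.log T := Real.log_pos (by exact_mod_cast hT)
  have hlogle : Real.log T ≤ harmonicNum T := FWProof.log_le_harmonicNum T
  have hsqle : Real.log T ^ 2 ≤ harmonicNum T ^ 2 := by
    apply pow_le_pow_left₀ hlogpos.le hlogle
  have hLn : (0 : ℝ) ≤ L * n := by positivity
  have herr : L * n / 2 * (2 / harmonicNum T ^ 2) ≤ 1 * (n : ℝ) * L / Real.log T ^ 2 := by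
    have h1 : L * n / 2 * (2 / harmonicNum T ^ 2) = L * n / harmonicNum T ^ 2 := by
      field_simp
    have h2 : L * n / harmonicNum T ^ 2 ≤ L * n / Real.log T ^ 2 :=
      div_le_div_of_nonneg_left hLn (by positivity) hsqle
    have h3 : L * n / Real.log T ^ 2 = 1 * (n : ℝ) * L / Real.log T ^ 2 := by ring
    linarith
  have hmul : L * n / 2 * (∑ k ∈ Finset.range T, (FWProof.sFW T (k + 1) - FWProof.sFW T k) ^ 2)
      ≤ L * n / 2 * (2 / harmonicNum T ^ 2) :=
    mul_le_mul_of_nonneg_left hD (by positivity)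
  have hquarter : ((1 : ℝ) / 2 - (1 / 2) ^ 2) = 1 / 4 := by norm_num
  rw [hquarter] at hfin
  linarith
end
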